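/- Every solution α : (1,∞) → ℝ of the ODE dα/dr = -(9/2)·r(r²+1)/((r²+2)(r+1)(r-1))·α(r) is of the form α(r) = K/((r²+2)^(3/4)(r+1)^(3/2)(r-1)^(3/2)) for some constant K ∈ ℝ. -/

import Mathlib

private noncomputable def stenzelG (r : ℝ) : ℝ :=
  (r ^ 2 + 2) ^ ((3 : ℝ) / 4) * (r + 1) ^ ((3 : ℝ) / 2) * (r - 1) ^ ((3 : ℝ) / 2)

private lemma stenzelG_pos {r : ℝ} (hr : 1 < r) : 0 < stenzelG r := by
  have h1 : (0:ℝ) < r ^ 2 + 2 := by positivity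
  have h2 : (0:ℝ) < r + 1 := by linarith
  have h3 : (0:ℝ) < r - 1 := by linarith
  exact mul_pos (mul_pos (Real.rpow_pos_of_pos h1 _) (Real.rpow_pos_of_pos h2 _))
    (Real.rpow_pos_of_pos h3 _)

private lemma stenzelG_deriv {r : ℝ} (hr : 1 < r) :
    HasDerivAt stenzelG
      ((9 / 2) * (r * (r ^ 2 + 1) / ((r ^ 2 + 2) * (r + 1) * (r - 1))) * stenzelG r) r := by
  have h1 : (0:ℝ) < r ^ 2 + 2 := by positivity
  have h2 : (0:ℝ) < r + 1 := by linarith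
  have h3 : (0:ℝ) < r - 1 := by linarith
  have d1 : HasDerivAt (fun r : ℝ => (r ^ 2 + 2) ^ ((3 : ℝ) / 4))
      ((↑2 * r ^ (2 - 1)) * (3 / 4) * (r ^ 2 + 2) ^ ((3 : ℝ) / 4 - 1)) r :=
    ((hasDerivAt_pow 2 r).add_const 2).rpow_const (Or.inl h1.ne')
  have d2 : HasDerivAt (fun r : ℝ => (r + 1) ^ ((3 : ℝ) / 2))
      (1 * (3 / 2) * (r + 1) ^ ((3 : ℝ) / 2 - 1)) r :=
    ((hasDerivAt_id r).add_const 1).rpow_const (Or.inl h2.ne')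
  have d3 : HasDerivAt (fun r : ℝ => (r - 1) ^ ((3 : ℝ) / 2))
      (1 * (3 / 2) * (r - 1) ^ ((3 : ℝ) / 2 - 1)) r :=
    ((hasDerivAt_id r).sub_const 1).rpow_const (Or.inl h3.ne')
  have := (d1.mul d2).mul d3
  refine this.congr_deriv (Eq.symm ?_)
  rw [Real.rpow_sub_one h1.ne', Real.rpow_sub_one h2.ne', Real.rpow_sub_one h3.ne']
  unfold stenzelG
  simp only [Pi.mul_apply]
  field_simp
  ring

theorem stenzel_abelian_instanton_classification (α : ℝ → ℝ)
    (hα : ∀ r ∈ Set.Ioi (1 : ℝ),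
      HasDerivAt α
        (-(9 / 2) * (r * (r ^ 2 + 1) / ((r ^ 2 + 2) * (r + 1) * (r - 1))) * α r) r) :
    ∃ K : ℝ, ∀ r ∈ Set.Ioi (1 : ℝ),
      α r = K / ((r ^ 2 + 2) ^ ((3 : ℝ) / 4) * (r + 1) ^ ((3 : ℝ) / 2) * (r - 1) ^ ((3 : ℝ) / 2)) := by
  set h : ℝ → ℝ := fun r => α r * stenzelG r with hh
  have hderiv : ∀ x ∈ Set.Ioi (1 : ℝ), HasDerivAt h 0 x := by
    intro x hx
    have hx1 : (1:ℝ) < x := hx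
    have := (hα x hx).mul (stenzelG_deriv hx1)
    refine this.congr_deriv (Eq.symm ?_)
    ring
  have hconv : Convex ℝ (Set.Ioi (1 : ℝ)) := convex_Ioi 1
  have hdiff : DifferentiableOn ℝ h (Set.Ioi (1 : ℝ)) :=
    fun x hx => (hderiv x hx).differentiableAt.differentiableWithinAt
  have hfd : ∀ x ∈ Set.Ioi (1 : ℝ), fderivWithin ℝ h (Set.Ioi (1 : ℝ)) x = 0 := by
    intro x hx
    rw [fderivWithin_of_isOpen isOpen_Ioi hx, (hderiv x hx).hasFDerivAt.fderiv]
    ext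
    simp
  refine ⟨h 2, fun r hr => ?_⟩
  have hr1 : (1:ℝ) < r := hr
  have hconst : h r = h 2 :=
    hconv.is_const_of_fderivWithin_eq_zero hdiff hfd hr (by norm_num)
  have hgpos := stenzelG_pos hr1
  rw [eq_div_iff (by unfold stenzelG at hgpos; exact hgpos.ne')]
  calc α r * _ = h r := rfl
    _ = h 2 := hconst
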